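/- In the same Hilbert-space example (shifted orthonormal basis functionals, Θ = ℓ²): condition (A₂) holds, i.e., for every c ∈ Θ̃ and ε > 0 there exist k ∈ ℕ and f ∈ M^{c^{(k)}} with ‖f‖ < ε; consequently Θ̃ is a CB-space and {g_i} is a Banach frame for X with respect to Θ̃. -/

import Mathlib

open Filter Topology

noncomputable section

set_option linter.unnecessarySeqFocus false

namespace Aux13

lemma toReal_two : (2 : ENNReal).toReal = 2 := by norm_num

lemma norm_sq (a : lp (fun _ : ℕ => ℝ) 2) :
    ‖a‖ ^ (2:ℝ) = ∑' j, ‖(a : ℕ → ℝ) j‖ ^ (2:ℝ) := by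
  have := lp.norm_rpow_eq_tsum (p := 2) (E := fun _ : ℕ => ℝ) (by norm_num) a
  simpa [toReal_two] using this

lemma memℓp_two_iff (c : ℕ → ℝ) :
    Memℓp c 2 ↔ Summable fun i => ‖c i‖ ^ (2:ℝ) := by
  rw [memℓp_gen_iff (p := 2) (by norm_num)]
  simp [toReal_two]

lemma mono (a c : lp (fun _ : ℕ => ℝ) 2)
    (h : ∀ j, |(a : ℕ → ℝ) j| ≤ |(c : ℕ → ℝ) j|) : ‖a‖ ≤ ‖c‖ := by
  have h1 : ‖a‖ ^ (2:ℝ) ≤ ‖c‖ ^ (2:ℝ) := by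
    rw [norm_sq, norm_sq]
    refine Summable.tsum_le_tsum (fun j => ?_) ?_ ?_
    · exact Real.rpow_le_rpow (norm_nonneg _) (h j) (by norm_num)
    · exact ((lp.memℓp a).summable (by norm_num)).congr (by simp [toReal_two])
    · exact ((lp.memℓp c).summable (by norm_num)).congr (by simp [toReal_two])
  by_contra hlt
  push_neg at hlt
  exact absurd h1 (not_le.2 (Real.rpow_lt_rpow (norm_nonneg _) hlt (by norm_num)))

def S : Submodule ℝ (ℕ → ℝ) where
  carrier := {c | Memℓp (fun j => c (j+1)) 2}
  add_mem' := fun h1 h2 => h1.add h2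
  zero_mem' := zero_memℓp
  smul_mem' := fun r c h => by exact h.const_smul r

def T : S →ₗ[ℝ] lp (fun _ : ℕ => ℝ) 2 where
  toFun c := ⟨fun j => (c : ℕ → ℝ) (j+1), c.2⟩
  map_add' c d := by ext j; rfl
  map_smul' r c := by ext j; rfl

lemma T_apply (c : S) (j : ℕ) : (T c : ℕ → ℝ) j = (c : ℕ → ℝ) (j+1) := rfl

end Aux13

/-- in the Hilbert-space example (shifted orthonormal basis functionals,
`Θ = ℓ²`): condition `(𝒜₂)` holds — for every `c ∈ Θ̃` and `ε > 0` there are `k` and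
`f ∈ M^{c^{(k)}}` with `‖f‖ < ε`; consequently `Θ̃` (with norm
`Nt c = inf {‖f‖ : f ∈ M^c}`) is a CB-space and `(g i)` is a Banach frame for `X` with
respect to `Θ̃`. -/
theorem shifted_ONB_A2_CB_banach_frame
    {X : Type*} [NormedAddCommGroup X] [InnerProductSpace ℝ X] [CompleteSpace X]
    (b : HilbertBasis ℕ ℝ X)
    (g : ℕ → X → ℝ)
    (hg : ∀ i f, g i f = (b.repr f : ℕ → ℝ) (i - 1))
    (Θt : Set (ℕ → ℝ))
    (hΘt : Θt = {c | Memℓp c 2 ∧ ∃ f : X, ∀ i, |c i| ≤ |g i f|})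
    (Nt : (ℕ → ℝ) → ℝ)
    (hNt : ∀ c, Nt c = sInf {r | ∃ f : X, (∀ i, |c i| ≤ |g i f|) ∧ r = ‖f‖}) :
    (∀ c ∈ Θt, ∀ ε > 0, ∃ k : ℕ, ∃ f : X,
      (∀ i, |if i < k then (0 : ℝ) else c i| ≤ |g i f|) ∧ ‖f‖ < ε) ∧
    ((∀ i, Pi.single i (1 : ℝ) ∈ Θt) ∧
      ∀ c ∈ Θt,
        Tendsto (fun n => Nt (fun i => if i < n then 0 else c i)) atTop (nhds 0)) ∧
    ((∀ f : X, (fun i => g i f) ∈ Θt ∧ Nt (fun i => g i f) ≤ ‖f‖) ∧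
      (∃ A > (0 : ℝ), ∀ f : X, A * ‖f‖ ≤ Nt (fun i => g i f)) ∧
      (∃ V : (ℕ → ℝ) →ₗ[ℝ] X, (∃ K : ℝ, ∀ c ∈ Θt, ‖V c‖ ≤ K * Nt c) ∧
        ∀ f : X, V (fun i => g i f) = f)) := by
  -- preliminaries
  have hbdd : ∀ c : ℕ → ℝ, BddBelow {r | ∃ f : X, (∀ i, |c i| ≤ |g i f|) ∧ r = ‖f‖} := by
    intro c
    exact ⟨0, by rintro r ⟨f, -, rfl⟩; exact norm_nonneg f⟩
  have hNt_nonneg : ∀ c : ℕ → ℝ, 0 ≤ Nt c := by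
    intro c
    rw [hNt]
    refine Real.sInf_nonneg ?_
    rintro r ⟨f, -, rfl⟩
    exact norm_nonneg f
  -- the key (𝒜₂) construction
  have key : ∀ c ∈ Θt, ∀ ε > (0:ℝ), ∃ k : ℕ, 1 ≤ k ∧ ∃ f : X,
      (∀ i, |if i < k then (0 : ℝ) else c i| ≤ |g i f|) ∧ ‖f‖ < ε := by
    intro c hc ε hε
    rw [hΘt] at hc
    obtain ⟨hc2, -⟩ := hc
    have hsum : Summable fun i => ‖c i‖ ^ (2:ℝ) := (Aux13.memℓp_two_iff c).1 hc2
    have htail : Tendsto (fun n => ∑' m, ‖c (m + n)‖ ^ (2:ℝ)) atTop (𝓝 0) :=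
      tendsto_sum_nat_add (fun i => ‖c i‖ ^ (2:ℝ))
    have hev : ∀ᶠ n in atTop, ∑' m, ‖c (m + n)‖ ^ (2:ℝ) < ε ^ (2:ℝ) :=
      htail.eventually (gt_mem_nhds (by positivity))
    obtain ⟨N, hN⟩ := eventually_atTop.1 hev
    set n := N + 1 with hn
    have hn1 : 1 ≤ n := Nat.le_add_left 1 N
    have htl : ∑' m, ‖c (m + n)‖ ^ (2:ℝ) < ε ^ (2:ℝ) := hN n (Nat.le_succ N)
    set d : ℕ → ℝ := fun j => if j + 1 < n then 0 else c (j + 1) with hd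
    have hdsum : Summable fun j => ‖d j‖ ^ (2:ℝ) := by
      refine Summable.of_nonneg_of_le (fun j => by positivity) (fun j => ?_)
        ((summable_nat_add_iff 1).2 hsum)
      by_cases hj : j + 1 < n <;> simp [hd, hj] <;> positivity
    have hdmem : Memℓp d 2 := (Aux13.memℓp_two_iff d).2 hdsum
    set a : lp (fun _ : ℕ => ℝ) 2 := ⟨d, hdmem⟩ with ha
    set f := b.repr.symm a with hf
    have hrf : (b.repr f : ℕ → ℝ) = d := by
      rw [hf, LinearIsometryEquiv.apply_symm_apply]
    refine ⟨n, hn1, f, fun i => ?_, ?_⟩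
    · rw [hg, hrf]
      match i with
      | 0 => simp [hd, Nat.lt_of_lt_of_le Nat.zero_lt_one hn1]
      | (j+1) =>
        simp only [Nat.add_sub_cancel, hd]
        exact le_refl _
    · have hnorm : ‖f‖ = ‖a‖ := by rw [hf, LinearIsometryEquiv.norm_map]
      have h2 : ‖a‖ ^ (2:ℝ) < ε ^ (2:ℝ) := by
        rw [Aux13.norm_sq]
        have hcoe : ∀ j, ‖(a : ℕ → ℝ) j‖ ^ (2:ℝ) = ‖d j‖ ^ (2:ℝ) := fun j => rfl
        calc ∑' j, ‖(a : ℕ → ℝ) j‖ ^ (2:ℝ) = ∑' j, ‖d j‖ ^ (2:ℝ) := by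
              exact tsum_congr hcoe
          _ = ∑ j ∈ Finset.range N, ‖d j‖ ^ (2:ℝ) + ∑' j, ‖d (j + N)‖ ^ (2:ℝ) :=
              (Summable.sum_add_tsum_nat_add N hdsum).symm
          _ = ∑' j, ‖d (j + N)‖ ^ (2:ℝ) := by
              rw [Finset.sum_eq_zero, zero_add]
              intro j hj
              have : j + 1 < n := by
                have := Finset.mem_range.1 hj
                omega
              simp [hd, this, Real.zero_rpow (by norm_num : (2:ℝ) ≠ 0)]
          _ = ∑' j, ‖c (j + n)‖ ^ (2:ℝ) := by
              refine tsum_congr fun j => ?_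
              have h1 : ¬ (j + N + 1 < n) := by omega
              have h2 : j + N + 1 = j + n := by omega
              simp [hd, h1, h2]
          _ < ε ^ (2:ℝ) := htl
      rw [hnorm]
      by_contra hle
      push_neg at hle
      exact absurd h2 (not_lt.2 (Real.rpow_le_rpow hε.le hle (by norm_num)))
  have hA2 : ∀ c ∈ Θt, ∀ ε > (0:ℝ), ∃ k : ℕ, ∃ f : X,
      (∀ i, |if i < k then (0 : ℝ) else c i| ≤ |g i f|) ∧ ‖f‖ < ε := by
    intro c hc ε hε
    obtain ⟨k, -, f, h1, h2⟩ := key c hc ε hε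
    exact ⟨k, f, h1, h2⟩
  refine ⟨hA2, ⟨?_, ?_⟩, ?_, ?_, ?_⟩
  · -- Pi.single i 1 ∈ Θt
    intro i
    rw [hΘt]
    constructor
    · refine (Aux13.memℓp_two_iff _).2 ?_
      refine summable_of_ne_finset_zero (s := {i}) fun j hj => ?_
      have hji : j ≠ i := by simpa using hj
      simp [Pi.single_apply, hji, Real.zero_rpow (by norm_num : (2:ℝ) ≠ 0)]
    · refine ⟨b (i - 1), fun j => ?_⟩
      rw [hg, HilbertBasis.repr_self]
      by_cases hji : j = i
      · subst hji
        simp [lp.single_apply]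
      · simp [Pi.single_apply, hji]
  · -- Tendsto Nt c^{(n)} → 0
    intro c hc
    rw [Metric.tendsto_atTop]
    intro ε hε
    obtain ⟨k, -, f, hdom, hfε⟩ := key c hc ε hε
    refine ⟨k, fun n hn => ?_⟩
    have hle : Nt (fun i => if i < n then 0 else c i) ≤ ‖f‖ := by
      rw [hNt]
      refine csInf_le (hbdd _) ⟨f, fun i => ?_, rfl⟩
      by_cases hi : i < n
      · simp [hi]
      · have hik : ¬ i < k := fun h => hi (lt_of_lt_of_le h hn)
        have := hdom i
        simp only [hik, if_false] at this ⊢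
        simpa [hi] using this
    have h0 := hNt_nonneg (fun i => if i < n then 0 else c i)
    rw [Real.dist_eq, sub_zero, abs_of_nonneg h0]
    exact lt_of_le_of_lt hle hfε
  · -- analysis operator bounds above
    intro f
    have hmem : (fun i => g i f) ∈ Θt := by
      rw [hΘt]
      constructor
      · refine (Aux13.memℓp_two_iff _).2 ?_
        refine (summable_nat_add_iff 1).1 ?_
        have : Summable fun i => ‖(b.repr f : ℕ → ℝ) i‖ ^ (2:ℝ) :=
          ((lp.memℓp (b.repr f)).summable (by norm_num)).congr
            (by simp [Aux13.toReal_two])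
        refine this.congr fun i => ?_
        rw [hg]
        simp
      · exact ⟨f, fun i => le_refl _⟩
    refine ⟨hmem, ?_⟩
    rw [hNt]
    exact csInf_le (hbdd _) ⟨f, fun i => le_refl _, rfl⟩
  · -- lower frame bound, A = 1
    refine ⟨1, one_pos, fun f => ?_⟩
    rw [hNt, one_mul]
    refine le_csInf ⟨‖f‖, f, fun i => le_refl _, rfl⟩ ?_
    rintro r ⟨h, hdom, rfl⟩
    have : ‖b.repr f‖ ≤ ‖b.repr h‖ := by
      refine Aux13.mono _ _ fun j => ?_
      have := hdom (j + 1)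
      rwa [hg, hg, Nat.add_sub_cancel] at this
    rwa [LinearIsometryEquiv.norm_map, LinearIsometryEquiv.norm_map] at this
  · -- reconstruction operator
    obtain ⟨q, hq⟩ := Submodule.exists_isCompl Aux13.S
    set π := Aux13.S.linearProjOfIsCompl q hq with hπ
    set V : (ℕ → ℝ) →ₗ[ℝ] X :=
      (b.repr.symm.toLinearMap ∘ₗ Aux13.T) ∘ₗ π with hV
    have hmemS : ∀ f : X, (fun i => g i f) ∈ Aux13.S := by
      intro f
      show Memℓp (fun j => g (j + 1) f) 2
      have : (fun j => g (j + 1) f) = (b.repr f : ℕ → ℝ) := by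
        funext j; rw [hg]; simp
      rw [this]
      exact lp.memℓp _
    have hVS : ∀ c : ℕ → ℝ, ∀ hc : c ∈ Aux13.S,
        V c = b.repr.symm (Aux13.T ⟨c, hc⟩) := by
      intro c hc
      have hπc : π c = ⟨c, hc⟩ := Submodule.linearProjOfIsCompl_apply_left hq ⟨c, hc⟩
      rw [hV]
      simp only [LinearMap.comp_apply]
      rw [hπc]
      rfl
    refine ⟨V, ⟨1, ?_⟩, ?_⟩
    · intro c hc
      have hcΘ := hc
      rw [hΘt] at hcΘ
      obtain ⟨hc2, f0, hf0⟩ := hcΘ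
      have hcS : c ∈ Aux13.S := by
        show Memℓp (fun j => c (j + 1)) 2
        refine (Aux13.memℓp_two_iff _).2 ?_
        exact (summable_nat_add_iff 1).2 ((Aux13.memℓp_two_iff c).1 hc2)
      rw [hVS c hcS, hNt, one_mul]
      refine le_csInf ⟨‖f0‖, f0, hf0, rfl⟩ ?_
      rintro r ⟨h, hdom, rfl⟩
      rw [LinearIsometryEquiv.norm_map]
      have : ‖Aux13.T ⟨c, hcS⟩‖ ≤ ‖b.repr h‖ := by
        refine Aux13.mono _ _ fun j => ?_
        rw [Aux13.T_apply]
        have := hdom (j + 1)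
        rwa [hg, Nat.add_sub_cancel] at this
      calc ‖Aux13.T ⟨c, hcS⟩‖ ≤ ‖b.repr h‖ := this
        _ = ‖h‖ := by rw [LinearIsometryEquiv.norm_map]
    · intro f
      rw [hVS _ (hmemS f)]
      have : Aux13.T ⟨(fun i => g i f), hmemS f⟩ = b.repr f := by
        ext j
        rw [Aux13.T_apply]
        show g (j + 1) f = _
        rw [hg]; simp
      rw [this, LinearIsometryEquiv.symm_apply_apply]
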